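/- arXiv:0812.3642 — 3 statements merged into one kernel-verified Lean document; each statement's English description precedes it below -/
import Mathlib

section
/- For positive integers M₁, M₂, M_r and any r in [0, min(M₁, M₂, M_r)], one has min(d_{M₁,M_r}(r), d_{M_r,M₂}(r)) = d_{min(M₁,M₂), M_r}(r), where d_{M,N} is the piecewise-linear interpolation of (k,(M−k)(N−k)). -/
/-- The optimal point-to-point MIMO DMT curve: the piecewise-linear interpolation of
the points `(k, (M-k)(N-k))`, `k = 0, …, min M N`, written via `k = ⌊r⌋`. -/
noncomputable def dmt (M N : ℕ) (r : ℝ) : ℝ :=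
  ((M : ℝ) - ⌊r⌋) * ((N : ℝ) - ⌊r⌋) - (r - ⌊r⌋) * ((M : ℝ) + (N : ℝ) - 2 * ⌊r⌋ - 1)

/-- The cut-set DMT of the two-hop relay channel:
`min(d_{M₁,M_r}(r), d_{M_r,M₂}(r)) = d_{min(M₁,M₂),M_r}(r)`. -/
theorem stmt11 (M1 M2 Mr : ℕ) (hM1 : 0 < M1) (hM2 : 0 < M2) (hMr : 0 < Mr) :
    ∀ r ∈ Set.Icc (0 : ℝ) ((min (min M1 M2) Mr : ℕ) : ℝ),
      min (dmt M1 Mr r) (dmt Mr M2 r) = dmt (min M1 M2) Mr r := by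
  intro r hr
  obtain ⟨hr0, hr1⟩ := hr
  have hrMr : r ≤ (Mr : ℝ) := by
    refine hr1.trans ?_
    exact_mod_cast min_le_right (min M1 M2) Mr
  have hcomm : dmt Mr M2 r = dmt M2 Mr r := by unfold dmt; ring
  have key : ∀ a b : ℕ, a ≤ b → dmt a Mr r ≤ dmt b Mr r := by
    intro a b hab
    have h1 : dmt b Mr r - dmt a Mr r = ((b : ℝ) - a) * ((Mr : ℝ) - r) := by
      unfold dmt; ring
    have h2 : (0 : ℝ) ≤ ((b : ℝ) - a) * ((Mr : ℝ) - r) := by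
      have : (a : ℝ) ≤ b := by exact_mod_cast hab
      apply mul_nonneg <;> linarith
    linarith
  rw [hcomm]
  rcases le_total M1 M2 with h | h
  · rw [min_eq_left h, min_eq_left (key M1 M2 h)]
  · rw [min_eq_right h, min_eq_right (key M2 M1 h)]
end

section
/- For positive integers M₁, M₂, N with M = min(M₁,M₂): for all r in [0, min(M, N)], d_{M₁+M₂, N}(r) ≥ d_{M, N}(r), where d_{M,N} is the piecewise-linear interpolation of (k,(M−k)(N−k)). -/
/-- Adding transmit antennas cannot decrease the DMT curve:
`d_{M₁+M₂,N}(r) ≥ d_{min(M₁,M₂),N}(r)` on the common domain. -/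
theorem stmt17 (M1 M2 N : ℕ) (hM1 : 0 < M1) (hM2 : 0 < M2) (hN : 0 < N) :
    ∀ r ∈ Set.Icc (0 : ℝ) ((min (min M1 M2) N : ℕ) : ℝ),
      dmt (min M1 M2) N r ≤ dmt (M1 + M2) N r := by
  intro r hr
  have hrN : r ≤ (N : ℝ) := by
    refine hr.2.trans ?_
    exact_mod_cast Nat.cast_le.mpr (min_le_right _ _)
  have hMM : ((min M1 M2 : ℕ) : ℝ) ≤ ((M1 + M2 : ℕ) : ℝ) := by
    exact_mod_cast (min_le_left M1 M2).trans (Nat.le_add_right _ _)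
  unfold dmt
  set M : ℕ := min M1 M2 with hMdef
  push_cast at hMM ⊢
  nlinarith [mul_nonneg (sub_nonneg.mpr hMM) (sub_nonneg.mpr hrN)]
end

section
/- Let R = r log₂ SNR and C(SNR) = Σ_{j=1}^{m} log₂(1 + (SNR/M)·SNR^{−α_j}) with fixed α_j ≥ 0 and r ≥ 0. If r < S(α) := Σ_j max(1−α_j,0), then for all sufficiently large SNR, R ≤ C(SNR) − 1; if r > S(α), then for all sufficiently large SNR, R > C(SNR). -/
open Filter Real

lemma term_ub {M : ℕ} (hM : 0 < M) (a x : ℝ) (hx : 1 ≤ x) :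
    Real.logb 2 (1 + (x / M) * x ^ (-a)) ≤ 1 + max (1 - a) 0 * Real.logb 2 x := by
  have hx0 : (0:ℝ) < x := lt_of_lt_of_le one_pos hx
  have hM1 : (1:ℝ) ≤ M := Nat.one_le_cast.2 hM
  have hM0 : (0:ℝ) < M := lt_of_lt_of_le one_pos hM1
  have hpow : x * x ^ (-a) = x ^ (1 - a) := by
    rw [sub_eq_add_neg, Real.rpow_add hx0, Real.rpow_one]
  have key : (x / M) * x ^ (-a) = x ^ (1 - a) / M := by
    rw [div_mul_eq_mul_div, hpow]
  have h1 : x ^ (1 - a) / M ≤ x ^ max (1 - a) 0 := by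
    calc x ^ (1 - a) / M ≤ x ^ (1 - a) / 1 := by
          apply div_le_div_of_nonneg_left (le_of_lt (Real.rpow_pos_of_pos hx0 _)) one_pos hM1
      _ = x ^ (1 - a) := by ring
      _ ≤ x ^ max (1 - a) 0 := Real.rpow_le_rpow_of_exponent_le hx (le_max_left _ _)
  have h2 : (1:ℝ) ≤ x ^ max (1 - a) 0 := Real.one_le_rpow hx (le_max_right _ _)
  have harg : 1 + (x / M) * x ^ (-a) ≤ 2 * x ^ max (1 - a) 0 := by
    rw [key]; linarith
  have hargpos : (0:ℝ) < 1 + (x / M) * x ^ (-a) := by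
    have := Real.rpow_pos_of_pos hx0 (-a)
    positivity
  calc Real.logb 2 (1 + (x / M) * x ^ (-a)) ≤ Real.logb 2 (2 * x ^ max (1 - a) 0) :=
        Real.logb_le_logb_of_le (by norm_num) hargpos harg
    _ = 1 + max (1 - a) 0 * Real.logb 2 x := by
        rw [Real.logb_mul (by norm_num) (by positivity),
          Real.logb_rpow_eq_mul_logb_of_pos hx0]
        norm_num

lemma term_lb {M : ℕ} (hM : 0 < M) (a x : ℝ) (hx : 1 ≤ x) :
    max (1 - a) 0 * Real.logb 2 x - Real.logb 2 M ≤
      Real.logb 2 (1 + (x / M) * x ^ (-a)) := by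
  have hx0 : (0:ℝ) < x := lt_of_lt_of_le one_pos hx
  have hM1 : (1:ℝ) ≤ M := Nat.one_le_cast.2 hM
  have hM0 : (0:ℝ) < M := lt_of_lt_of_le one_pos hM1
  have hpow : x * x ^ (-a) = x ^ (1 - a) := by
    rw [sub_eq_add_neg, Real.rpow_add hx0, Real.rpow_one]
  have key : (x / M) * x ^ (-a) = x ^ (1 - a) / M := by
    rw [div_mul_eq_mul_div, hpow]
  have hargpos : (0:ℝ) < (x / M) * x ^ (-a) := by
    have := Real.rpow_pos_of_pos hx0 (-a); positivity
  have hlogM : 0 ≤ Real.logb 2 M := Real.logb_nonneg (by norm_num) hM1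
  rcases le_or_gt (1 - a) 0 with hb | hb
  · rw [max_eq_right hb]
    have : 0 ≤ Real.logb 2 (1 + (x / M) * x ^ (-a)) :=
      Real.logb_nonneg (by norm_num) (by linarith)
    linarith
  · rw [max_eq_left hb.le]
    have h1 : x ^ (1 - a) / M ≤ 1 + (x / M) * x ^ (-a) := by rw [key]; linarith
    calc (1 - a) * Real.logb 2 x - Real.logb 2 M
        = Real.logb 2 (x ^ (1 - a) / M) := by
          rw [Real.logb_div (by positivity) (by positivity),
            Real.logb_rpow_eq_mul_logb_of_pos hx0]
      _ ≤ Real.logb 2 (1 + (x / M) * x ^ (-a)) :=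
          Real.logb_le_logb_of_le (by norm_num) (by positivity) h1

/-- Asymptotic outage threshold: with `R = r log₂ SNR` and
`C(SNR) = Σ_j log₂(1 + (SNR/M) SNR^{-α_j})`, if `r < S(α)` then eventually
`R ≤ C(SNR) - 1`, and if `r > S(α)` then eventually `R > C(SNR)`. -/
theorem stmt19 (M m : ℕ) (hM : 0 < M) (hm : 0 < m) (α : Fin m → ℝ)
    (hα : ∀ j, 0 ≤ α j) (r : ℝ) (hr : 0 ≤ r) :
    ((r < ∑ j, max (1 - α j) 0) → ∀ᶠ SNR : ℝ in atTop,
      r * Real.logb 2 SNR ≤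
        (∑ j, Real.logb 2 (1 + (SNR / (M : ℝ)) * SNR ^ (-(α j)))) - 1) ∧
    ((r > ∑ j, max (1 - α j) 0) → ∀ᶠ SNR : ℝ in atTop,
      r * Real.logb 2 SNR >
        ∑ j, Real.logb 2 (1 + (SNR / (M : ℝ)) * SNR ^ (-(α j)))) := by
  set S := ∑ j, max (1 - α j) 0 with hS
  have hlog : Tendsto (fun x : ℝ => Real.logb 2 x) atTop atTop :=
    Real.tendsto_logb_atTop (by norm_num)
  have hub : ∀ x : ℝ, 1 ≤ x →
      (∑ j, Real.logb 2 (1 + (x / M) * x ^ (-(α j)))) ≤ m + S * Real.logb 2 x := by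
    intro x hx
    calc (∑ j, Real.logb 2 (1 + (x / M) * x ^ (-(α j))))
        ≤ ∑ j : Fin m, (1 + max (1 - α j) 0 * Real.logb 2 x) :=
          Finset.sum_le_sum fun j _ => term_ub hM (α j) x hx
      _ = m + S * Real.logb 2 x := by
          rw [Finset.sum_add_distrib, Finset.sum_const, ← Finset.sum_mul]
          simp [hS]
  have hlb : ∀ x : ℝ, 1 ≤ x →
      S * Real.logb 2 x - m * Real.logb 2 M ≤
        ∑ j, Real.logb 2 (1 + (x / M) * x ^ (-(α j))) := by
    intro x hx
    calc S * Real.logb 2 x - m * Real.logb 2 M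
        = ∑ j : Fin m, (max (1 - α j) 0 * Real.logb 2 x - Real.logb 2 M) := by
          rw [Finset.sum_sub_distrib, Finset.sum_const, ← Finset.sum_mul]
          simp [hS]
      _ ≤ _ := Finset.sum_le_sum fun j _ => term_lb hM (α j) x hx
  constructor
  · intro hrS
    have hpos : 0 < S - r := by linarith
    filter_upwards [hlog.eventually_ge_atTop ((1 + m * Real.logb 2 M) / (S - r)),
      eventually_ge_atTop (1:ℝ)] with x h1 h2
    have key : 1 + m * Real.logb 2 M ≤ (S - r) * Real.logb 2 x := by
      rw [← div_le_iff₀' hpos] at *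
      linarith [h1]
    have := hlb x h2
    linarith
  · intro hrS
    have hpos : 0 < r - S := by linarith
    filter_upwards [hlog.eventually_gt_atTop ((m : ℝ) / (r - S)),
      eventually_ge_atTop (1:ℝ)] with x h1 h2
    have key : (m : ℝ) < (r - S) * Real.logb 2 x := by
      rw [div_lt_iff₀ hpos] at h1
      linarith
    have := hub x h2
    linarith
end
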